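/- Let χ_{k+1} ∈ ℂ^{n×w} be obtained from χ_k ∈ ℂ^{n×w} by deleting the first column and appending a new column x at the end. Suppose χ_k = U_χ Σ_χ V_χ* is an SVD with V_χ = [v₁; V₂] (v₁ the first row), Ś = Σ_χ − U_χ* χ_k e₁ e₁ᵀ V_χ has SVD U_ś Σ_ś V_ś*, and Ŝ = [Σ_ś, (U_χ U_ś)* x] has SVD U_ŝ Σ_ŝ [V_{ŝ1}; v_{ŝ2}]*. Then χ_{k+1} = (U_χ U_ś U_ŝ) Σ_ŝ [V₂ V_ś V_{ŝ1}; v_{ŝ2}]* and this is an SVD of χ_{k+1}. -/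

import Mathlib

open Matrix

/-- Append a column `x` at the right end of a matrix. -/
def appendCol {n k : ℕ} (M : Matrix (Fin n) (Fin k) ℂ) (x : Fin n → ℂ) :
    Matrix (Fin n) (Fin (k + 1)) ℂ :=
  Matrix.of fun i j => Fin.lastCases (motive := fun _ => ℂ) (x i) (fun j' => M i j') j

/-- Append a row `v` at the bottom of a matrix. -/
def appendRow {k n : ℕ} (M : Matrix (Fin k) (Fin n) ℂ) (v : Fin n → ℂ) :
    Matrix (Fin (k + 1)) (Fin n) ℂ :=
  Matrix.of fun i j => Fin.lastCases (motive := fun _ => ℂ) (v j) (fun i' => M i' j) i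

/-- Remove the last row of a matrix. -/
def dropLastRow {k n : ℕ} (M : Matrix (Fin (k + 1)) (Fin n) ℂ) :
    Matrix (Fin k) (Fin n) ℂ :=
  Matrix.of fun i j => M i.castSucc j

/-- The last row of a matrix. -/
def lastRow {k n : ℕ} (M : Matrix (Fin (k + 1)) (Fin n) ℂ) : Fin n → ℂ :=
  fun j => M (Fin.last k) j

/-- Remove the first column of a matrix. -/
def dropFirstCol {n w : ℕ} (M : Matrix (Fin n) (Fin (w + 1)) ℂ) :
    Matrix (Fin n) (Fin w) ℂ :=
  Matrix.of fun i j => M i j.succ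

/-- Remove the first row of a matrix. -/
def dropFirstRow {w n : ℕ} (M : Matrix (Fin (w + 1)) (Fin n) ℂ) :
    Matrix (Fin w) (Fin n) ℂ :=
  Matrix.of fun i j => M i.succ j

namespace Svd17aux

@[simp] lemma appendCol_last {n k : ℕ} (M : Matrix (Fin n) (Fin k) ℂ) (x : Fin n → ℂ) (i : Fin n) :
    appendCol M x i (Fin.last k) = x i := by simp [appendCol]

@[simp] lemma appendCol_castSucc {n k : ℕ} (M : Matrix (Fin n) (Fin k) ℂ) (x : Fin n → ℂ)
    (i : Fin n) (j : Fin k) : appendCol M x i j.castSucc = M i j := by simp [appendCol]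

@[simp] lemma appendRow_last {k n : ℕ} (M : Matrix (Fin k) (Fin n) ℂ) (v : Fin n → ℂ) (j : Fin n) :
    appendRow M v (Fin.last k) j = v j := by simp [appendRow]

@[simp] lemma appendRow_castSucc {k n : ℕ} (M : Matrix (Fin k) (Fin n) ℂ) (v : Fin n → ℂ)
    (i : Fin k) (j : Fin n) : appendRow M v i.castSucc j = M i j := by simp [appendRow]

/-- embedding matrix : block diag of M and the 1×1 identity -/
def emb {w q : ℕ} (M : Matrix (Fin w) (Fin q) ℂ) : Matrix (Fin (w + 1)) (Fin (q + 1)) ℂ :=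
  appendCol (appendRow M 0) (fun i => if i = Fin.last w then 1 else 0)

lemma appendRow_factor {w q k : ℕ} (M : Matrix (Fin w) (Fin q) ℂ)
    (P : Matrix (Fin (q + 1)) (Fin k) ℂ) :
    appendRow (M * dropLastRow P) (lastRow P) = emb M * P := by
  ext i j
  refine Fin.lastCases ?_ ?_ i
  · rw [appendRow_last]
    simp [emb, mul_apply, Fin.sum_univ_castSucc, lastRow]
  · intro i'
    rw [appendRow_castSucc]
    simp [emb, mul_apply, Fin.sum_univ_castSucc, dropLastRow,
      Fin.ne_of_lt (Fin.castSucc_lt_last i')]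

lemma appendCol_mul_embH {w q : ℕ} (S : Matrix (Fin q) (Fin q) ℂ) (y : Fin q → ℂ)
    (M : Matrix (Fin w) (Fin q) ℂ) :
    appendCol S y * (emb M)ᴴ = appendCol (S * Mᴴ) y := by
  ext i j
  refine Fin.lastCases ?_ ?_ j
  · rw [appendCol_last]
    simp [emb, mul_apply, Fin.sum_univ_castSucc, conjTranspose_apply]
  · intro j'
    rw [appendCol_castSucc]
    simp [emb, mul_apply, Fin.sum_univ_castSucc, conjTranspose_apply,
      Fin.ne_of_lt (Fin.castSucc_lt_last j')]

lemma embH_mul_emb {w q : ℕ} (M : Matrix (Fin w) (Fin q) ℂ) (h : Mᴴ * M = 1) :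
    (emb M)ᴴ * emb M = 1 := by
  ext s t
  refine Fin.lastCases ?_ ?_ s
  · refine Fin.lastCases ?_ ?_ t
    · simp [emb, mul_apply, Fin.sum_univ_castSucc, conjTranspose_apply]
    · intro t'
      simp [emb, mul_apply, Fin.sum_univ_castSucc, conjTranspose_apply,
        Fin.ne_of_lt (Fin.castSucc_lt_last t'), (Fin.ne_of_lt (Fin.castSucc_lt_last t')).symm,
        one_apply]
  · intro s'
    refine Fin.lastCases ?_ ?_ t
    · simp [emb, mul_apply, Fin.sum_univ_castSucc, conjTranspose_apply,
        Fin.ne_of_lt (Fin.castSucc_lt_last s'), (Fin.ne_of_lt (Fin.castSucc_lt_last s')).symm,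
        one_apply]
    · intro t'
      have := congrFun (congrFun h s') t'
      simp only [mul_apply, conjTranspose_apply, one_apply] at this
      simp only [emb, mul_apply, Fin.sum_univ_castSucc, conjTranspose_apply, one_apply,
        Fin.castSucc_inj]
      simp [appendCol, appendRow, Fin.ne_of_lt (Fin.castSucc_lt_last s')]
      exact this

lemma mul_appendCol {n k q : ℕ} (A : Matrix (Fin n) (Fin k) ℂ) (B : Matrix (Fin k) (Fin q) ℂ)
    (y : Fin k → ℂ) : A * appendCol B y = appendCol (A * B) (A *ᵥ y) := by
  ext i j
  refine Fin.lastCases ?_ ?_ j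
  · rw [appendCol_last]
    simp [mul_apply, mulVec, dotProduct]
  · intro j'
    rw [appendCol_castSucc]
    simp [mul_apply]

lemma dropFirstCol_mul_conjT {m k w : ℕ} (A : Matrix (Fin m) (Fin k) ℂ)
    (D : Matrix (Fin (w + 1)) (Fin k) ℂ) :
    dropFirstCol (A * Dᴴ) = A * (dropFirstRow D)ᴴ := by
  ext i j
  simp [dropFirstCol, dropFirstRow, mul_apply, conjTranspose_apply]

lemma dropFirstRowH_mul {w m : ℕ} (D : Matrix (Fin (w + 1)) (Fin m) ℂ) :
    (dropFirstRow D)ᴴ * dropFirstRow D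
      = Dᴴ * D - vecMulVec (fun j => star (D 0 j)) (fun j => D 0 j) := by
  ext j k
  simp only [mul_apply, conjTranspose_apply, dropFirstRow, Matrix.of_apply, Matrix.sub_apply,
    vecMulVec_apply, Fin.sum_univ_succ]
  ring

lemma mul_vecMulVec' {n m k : ℕ} (A : Matrix (Fin n) (Fin m) ℂ) (b : Fin m → ℂ)
    (c : Fin k → ℂ) : A * vecMulVec b c = vecMulVec (A *ᵥ b) c := by
  ext i j
  simp [mul_apply, vecMulVec_apply, mulVec, dotProduct, Finset.sum_mul, mul_assoc]

lemma vecMulVec_zero_left {n k : ℕ} (c : Fin k → ℂ) :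
    vecMulVec (0 : Fin n → ℂ) c = 0 := by
  ext i j; simp [vecMulVec_apply]

end Svd17aux

set_option maxHeartbeats 1000000 in
open Svd17aux in
/-- Windowed incremental SVD: sliding the window (deleting the first column of `χ_k` and
appending `x`) and combining the decremental SVD step (via `Ś = Sg − Uᴴ x₁ z₁ᵀ V` with SVD
`U_ś Sg_ś V_śᴴ`, `Sg_ś` invertible) with the incremental append step (via
`Ŝ = [Sg_ś, (U U_ś)ᴴ x]` with SVD `U_ŝ Sg_ŝ [V_{ŝ1}; v_{ŝ2}]ᴴ`) yields
`χ_{k+1} = (U U_ś U_ŝ) Sg_ŝ [V₂ V_ś V_{ŝ1}; v_{ŝ2}]ᴴ`, and this is an SVD of `χ_{k+1}`. -/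
theorem stmt17 (n w q : ℕ) (hq : q = min n (w + 1))
    (χk : Matrix (Fin n) (Fin (w + 1)) ℂ) (x : Fin n → ℂ)
    (U : Matrix (Fin n) (Fin q) ℂ) (Sg : Matrix (Fin q) (Fin (w + 1)) ℂ)
    (V : Matrix (Fin (w + 1)) (Fin (w + 1)) ℂ)
    (hU : Uᴴ * U = 1) (hV : Vᴴ * V = 1) (hV' : V * Vᴴ = 1)
    (hχ : χk = U * Sg * Vᴴ)
    (Uds Sgds : Matrix (Fin q) (Fin q) ℂ) (Vds : Matrix (Fin (w + 1)) (Fin q) ℂ)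
    (hUds : Udsᴴ * Uds = 1) (hVds : Vdsᴴ * Vds = 1) (hSgdsInv : IsUnit Sgds)
    (hSd : Sg - Uᴴ * vecMulVec (fun i => χk i 0)
        (fun j : Fin (w + 1) => if j = 0 then (1 : ℂ) else 0) * V = Uds * Sgds * Vdsᴴ)
    (Uhs Sghs : Matrix (Fin q) (Fin q) ℂ) (Vhs : Matrix (Fin (q + 1)) (Fin q) ℂ)
    (hUhs : Uhsᴴ * Uhs = 1) (hUhs' : Uhs * Uhsᴴ = 1) (hVhs : Vhsᴴ * Vhs = 1)
    (hSghsDiag : Sghs.IsDiag)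
    (hSghsPos : ∀ i, 0 ≤ (Sghs i i).re ∧ (Sghs i i).im = 0)
    (hSh : appendCol Sgds ((U * Uds)ᴴ *ᵥ x) = Uhs * Sghs * Vhsᴴ) :
    appendCol (dropFirstCol χk) x
      = (U * Uds * Uhs) * Sghs *
        (appendRow (dropFirstRow V * Vds * dropLastRow Vhs) (lastRow Vhs))ᴴ ∧
    (U * Uds * Uhs)ᴴ * (U * Uds * Uhs) = 1 ∧
    (appendRow (dropFirstRow V * Vds * dropLastRow Vhs) (lastRow Vhs))ᴴ *
      appendRow (dropFirstRow V * Vds * dropLastRow Vhs) (lastRow Vhs) = 1 := by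
  -- notation
  set x₁ : Fin n → ℂ := fun i => χk i 0 with hx₁def
  set z : Fin (w + 1) → ℂ := fun j : Fin (w + 1) => if j = 0 then (1 : ℂ) else 0 with hzdef
  set c : Fin (w + 1) → ℂ := fun j => star (V 0 j) with hcdef
  -- basic vector identities
  have hc_eq : c = Vᴴ *ᵥ z := by
    ext j
    simp [hcdef, hzdef, mulVec, dotProduct, conjTranspose_apply, mul_ite, mul_one, mul_zero]
  have hVc : V *ᵥ c = z := by
    have h1 : V *ᵥ c = fun i => (V * Vᴴ) i 0 := by
      ext i
      simp [hcdef, mulVec, dotProduct, mul_apply, conjTranspose_apply]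
    rw [h1, hV']
    ext i
    simp [hzdef, one_apply]
  have hx₁z : x₁ = χk *ᵥ z := by
    ext i
    simp [hx₁def, hzdef, mulVec, dotProduct, mul_ite, mul_one, mul_zero]
  have hzz : z ⬝ᵥ z = 1 := by
    simp [hzdef, dotProduct, ite_and]
  -- step 1 : (Sg - Uᴴ x₁ zᵀ V) *ᵥ c = 0
  have key1 : (Sg - Uᴴ * vecMulVec x₁ z * V) *ᵥ c = 0 := by
    have hA : (Uᴴ * vecMulVec x₁ z * V) *ᵥ c = Uᴴ *ᵥ x₁ := by
      rw [← Matrix.mulVec_mulVec, hVc, ← Matrix.mulVec_mulVec]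
      ext i
      simp [vecMulVec_apply, mulVec, dotProduct, hzdef, mul_ite, mul_one, mul_zero, ite_and]
    have hB : Uᴴ *ᵥ x₁ = (Sg * Vᴴ) *ᵥ z := by
      have h9 : Uᴴ * (U * Sg * Vᴴ) = Sg * Vᴴ := by
        calc Uᴴ * (U * Sg * Vᴴ) = (Uᴴ * U) * (Sg * Vᴴ) := by
              simp only [Matrix.mul_assoc]
          _ = Sg * Vᴴ := by rw [hU, Matrix.one_mul]
      rw [hx₁z, hχ, Matrix.mulVec_mulVec, h9]
    have hC : Sg *ᵥ c = (Sg * Vᴴ) *ᵥ z := by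
      rw [hc_eq, Matrix.mulVec_mulVec]
    rw [Matrix.sub_mulVec, hA, hB, hC, sub_self]
  have key2 : (Uds * Sgds * Vdsᴴ) *ᵥ c = 0 := by rw [← hSd]; exact key1
  have key3 : (Sgds * Vdsᴴ) *ᵥ c = 0 := by
    have h1 : Udsᴴ *ᵥ ((Uds * Sgds * Vdsᴴ) *ᵥ c) = 0 := by rw [key2, Matrix.mulVec_zero]
    rw [Matrix.mulVec_mulVec] at h1
    have h2 : Udsᴴ * (Uds * Sgds * Vdsᴴ) = Sgds * Vdsᴴ := by
      calc Udsᴴ * (Uds * Sgds * Vdsᴴ) = (Udsᴴ * Uds) * (Sgds * Vdsᴴ) := by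
            rw [Matrix.mul_assoc, Matrix.mul_assoc]
        _ = Sgds * Vdsᴴ := by rw [hUds, Matrix.one_mul]
    rwa [h2] at h1
  have hVdsc : Vdsᴴ *ᵥ c = 0 := by
    obtain ⟨u, hu⟩ := hSgdsInv
    have h1 : (↑u⁻¹ : Matrix (Fin q) (Fin q) ℂ) *ᵥ ((Sgds * Vdsᴴ) *ᵥ c) = 0 := by
      rw [key3, Matrix.mulVec_zero]
    rw [Matrix.mulVec_mulVec, ← Matrix.mul_assoc, ← hu, Units.inv_mul, Matrix.one_mul] at h1
    exact h1
  -- c is nonzero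
  have hcne : c ≠ 0 := by
    intro h0
    have h1 : (V * Vᴴ) 0 0 = 1 := by rw [hV']; simp
    have h2 : (V * Vᴴ) 0 0 = ∑ j, V 0 j * c j := by
      simp [mul_apply, conjTranspose_apply, hcdef]
    rw [h2, h0] at h1
    simp at h1
  -- q = n
  have hqn : q = n := by
    rcases le_or_gt n w with h | h
    · rw [hq]; exact min_eq_left (by omega)
    · exfalso
      have hq' : q = w + 1 := by rw [hq]; exact min_eq_right (by omega)
      subst hq'
      have hVds' : Vds * Vdsᴴ = 1 := mul_eq_one_comm.mp hVds
      apply hcne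
      calc c = (Vds * Vdsᴴ) *ᵥ c := by rw [hVds', Matrix.one_mulVec]
        _ = Vds *ᵥ (Vdsᴴ *ᵥ c) := by rw [Matrix.mulVec_mulVec]
        _ = 0 := by rw [hVdsc, Matrix.mulVec_zero]
  subst hqn
  -- squares
  have hU2 : U * Uᴴ = 1 := mul_eq_one_comm.mp hU
  have hUds2 : Uds * Udsᴴ = 1 := mul_eq_one_comm.mp hUds
  have hUU : (U * Uds) * (U * Uds)ᴴ = 1 := by
    rw [conjTranspose_mul]
    calc U * Uds * (Udsᴴ * Uᴴ) = U * (Uds * Udsᴴ) * Uᴴ := by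
          rw [Matrix.mul_assoc, Matrix.mul_assoc, Matrix.mul_assoc]
      _ = 1 := by rw [hUds2, Matrix.mul_one, hU2]
  -- M and its orthonormality
  set M : Matrix (Fin w) (Fin q) ℂ := dropFirstRow V * Vds with hMdef
  have hMM : Mᴴ * M = 1 := by
    rw [hMdef, conjTranspose_mul]
    calc Vdsᴴ * (dropFirstRow V)ᴴ * (dropFirstRow V * Vds)
        = Vdsᴴ * ((dropFirstRow V)ᴴ * dropFirstRow V) * Vds := by
          rw [Matrix.mul_assoc, Matrix.mul_assoc, Matrix.mul_assoc]
      _ = Vdsᴴ * (Vᴴ * V - vecMulVec c (fun j => V 0 j)) * Vds := by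
          rw [dropFirstRowH_mul]
      _ = Vdsᴴ * Vds - (Vdsᴴ * vecMulVec c (fun j => V 0 j)) * Vds := by
          rw [Matrix.mul_sub, Matrix.sub_mul, hV, Matrix.mul_one]
      _ = 1 := by
          rw [mul_vecMulVec', hVdsc, vecMulVec_zero_left, Matrix.zero_mul, sub_zero, hVds]
  -- factorization of χk minus first column rank-one part
  have hχO : χk - vecMulVec x₁ z = U * Uds * Sgds * Vdsᴴ * Vᴴ := by
    have h1 : U * (Uds * Sgds * Vdsᴴ) * Vᴴ
        = U * (Sg - Uᴴ * vecMulVec x₁ z * V) * Vᴴ := by rw [hSd]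
    calc χk - vecMulVec x₁ z
        = U * Sg * Vᴴ - U * Uᴴ * vecMulVec x₁ z * (V * Vᴴ) := by
          rw [hU2, hV', Matrix.mul_one, Matrix.one_mul, hχ]
      _ = U * (Sg - Uᴴ * vecMulVec x₁ z * V) * Vᴴ := by
          rw [Matrix.mul_sub, Matrix.sub_mul]
          congr 1
          calc U * Uᴴ * vecMulVec x₁ z * (V * Vᴴ)
              = U * (Uᴴ * vecMulVec x₁ z * V) * Vᴴ := by
                rw [Matrix.mul_assoc, Matrix.mul_assoc, Matrix.mul_assoc, Matrix.mul_assoc,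
                  Matrix.mul_assoc]
            _ = U * (Uᴴ * vecMulVec x₁ z * V) * Vᴴ := rfl
      _ = U * (Uds * Sgds * Vdsᴴ) * Vᴴ := by rw [hSd]
      _ = U * Uds * Sgds * Vdsᴴ * Vᴴ := by
          simp only [Matrix.mul_assoc]
  have hdrop : dropFirstCol χk = U * Uds * Sgds * Mᴴ := by
    have h1 : dropFirstCol χk = dropFirstCol (χk - vecMulVec x₁ z) := by
      ext i j
      simp [dropFirstCol, Matrix.sub_apply, vecMulVec_apply, hzdef, Fin.succ_ne_zero]
    rw [h1, hχO, dropFirstCol_mul_conjT, hMdef, conjTranspose_mul, ← Matrix.mul_assoc]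
  -- main equality
  refine ⟨?_, ?_, ?_⟩
  · rw [appendRow_factor, conjTranspose_mul]
    calc appendCol (dropFirstCol χk) x
        = appendCol (U * Uds * Sgds * Mᴴ) ((U * Uds) *ᵥ ((U * Uds)ᴴ *ᵥ x)) := by
          rw [hdrop, Matrix.mulVec_mulVec, hUU, Matrix.one_mulVec]
      _ = (U * Uds) * appendCol (Sgds * Mᴴ) ((U * Uds)ᴴ *ᵥ x) := by
          rw [mul_appendCol, ← Matrix.mul_assoc]
      _ = (U * Uds) * (appendCol Sgds ((U * Uds)ᴴ *ᵥ x) * (emb M)ᴴ) := by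
          rw [appendCol_mul_embH]
      _ = (U * Uds) * (Uhs * Sghs * Vhsᴴ * (emb M)ᴴ) := by rw [hSh]
      _ = U * Uds * Uhs * Sghs * (Vhsᴴ * (emb M)ᴴ) := by
          simp only [Matrix.mul_assoc]
  · calc (U * Uds * Uhs)ᴴ * (U * Uds * Uhs)
        = Uhsᴴ * (Udsᴴ * ((Uᴴ * U) * Uds) * Uhs) := by
          simp only [conjTranspose_mul, Matrix.mul_assoc]
      _ = 1 := by rw [hU, Matrix.one_mul, hUds, Matrix.one_mul, hUhs]
  · rw [appendRow_factor, conjTranspose_mul]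
    calc Vhsᴴ * (emb M)ᴴ * (emb M * Vhs)
        = Vhsᴴ * ((emb M)ᴴ * emb M) * Vhs := by
          rw [Matrix.mul_assoc, Matrix.mul_assoc, Matrix.mul_assoc]
      _ = 1 := by rw [embH_mul_emb M hMM, Matrix.mul_one, hVhs]
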